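/- The set K = ⋂_{ℓ∈ℕ} co(Z^ℓ) is a nonempty convex polytope: K is nonempty, compact and convex, and there exists a finite set F ⊂ ℝ^d of at most n points such that K equals the convex hull of F. -/

import Mathlib

open scoped RealInnerProductSpace BigOperators Classical
open Filter Metric Topology

noncomputable section

/-- The hardmax attention (argmax) index set `C_i` for a token configuration `z`
(attention matrix `A = I`): the set of indices `j` maximizing `⟪z_i, z_j⟫`. -/
def attn {d n : ℕ} (z : Fin n → EuclideanSpace ℝ (Fin d)) (i : Fin n) : Finset (Fin n) :=
  Finset.univ.filter fun j => (⟪z i, z j⟫ = ⨆ ℓ, ⟪z i, z ℓ⟫)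

/-- The pure-attention hardmax transformer dynamics with step-size `α > 0` and `A = I`:
`z_i^{k+1} = z_i^k + (α/(1+α))·(1/|C_i^k|)·Σ_{j ∈ C_i^k} (z_j^k − z_i^k)`. -/
def IsDyn {d n : ℕ} (α : ℝ) (z : ℕ → Fin n → EuclideanSpace ℝ (Fin d)) : Prop :=
  ∀ k i, z (k + 1) i = z k i +
    (α / (1 + α)) • (((attn (z k) i).card : ℝ)⁻¹ • ∑ j ∈ attn (z k) i, (z k j - z k i))

/-- The limiting set `K = ⋂ₖ co(Z^k)`, the intersection of the convex hulls of the token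
configurations over all times. -/
def limitK {d n : ℕ} (z : ℕ → Fin n → EuclideanSpace ℝ (Fin d)) :
    Set (EuclideanSpace ℝ (Fin d)) :=
  ⋂ k, convexHull ℝ (Set.range (z k))

lemma attn_nonempty {d n : ℕ} (hn : 0 < n) (z : Fin n → EuclideanSpace ℝ (Fin d)) (i : Fin n) :
    (attn z i).Nonempty := by
  have : Nonempty (Fin n) := ⟨⟨0, hn⟩⟩
  obtain ⟨j, hj⟩ := Finite.exists_max (fun ℓ => ⟪z i, z ℓ⟫)
  refine ⟨j, ?_⟩
  simp only [attn, Finset.mem_filter, Finset.mem_univ, true_and]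
  exact le_antisymm (le_ciSup (f := fun ℓ => ⟪z i, z ℓ⟫) (Set.Finite.bddAbove (Set.finite_range _)) j) (ciSup_le hj)

lemma step_mem {d n : ℕ} (hn : 0 < n) {α : ℝ} (hα : 0 < α)
    {z : ℕ → Fin n → EuclideanSpace ℝ (Fin d)} (hdyn : IsDyn α z) (k : ℕ) (i : Fin n) :
    z (k + 1) i ∈ convexHull ℝ (Set.range (z k)) := by
  set C := attn (z k) i with hC
  have hCne : C.Nonempty := attn_nonempty hn (z k) i
  have hm : (0:ℝ) < C.card := by exact_mod_cast Finset.card_pos.2 hCne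
  set c : ℝ := α / (1 + α) with hc
  have h1α : (0:ℝ) < 1 + α := by linarith
  have hc0 : 0 ≤ c := div_nonneg hα.le h1α.le
  have hc1 : c ≤ 1 := by rw [hc, div_le_one h1α]; linarith
  set S := convexHull ℝ (Set.range (z k)) with hS
  have hconv : Convex ℝ S := convex_convexHull ℝ _
  have hzi : z k i ∈ S := subset_convexHull ℝ _ ⟨i, rfl⟩
  have hcent : ((C.card : ℝ))⁻¹ • ∑ j ∈ C, z k j ∈ S := by
    rw [Finset.smul_sum]
    refine hconv.sum_mem (fun j _ => by positivity) ?_ (fun j _ => subset_convexHull ℝ _ ⟨j, rfl⟩)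
    rw [Finset.sum_const, nsmul_eq_mul, mul_inv_cancel₀ hm.ne']
  have key : z (k+1) i = (1 - c) • z k i + c • (((C.card : ℝ))⁻¹ • ∑ j ∈ C, z k j) := by
    rw [hdyn k i]
    have hsum : ∑ j ∈ C, (z k j - z k i) = (∑ j ∈ C, z k j) - (C.card : ℝ) • z k i := by
      rw [Finset.sum_sub_distrib, Finset.sum_const, ← Nat.cast_smul_eq_nsmul ℝ]
    rw [hsum, smul_sub, smul_smul, inv_mul_cancel₀ hm.ne', one_smul]
    module
  rw [key]
  exact hconv hzi hcent (by linarith) hc0 (by ring)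

/-- `K = ⋂ₖ co(Z^k)` is a nonempty convex polytope: it is nonempty, compact, convex, and is
the convex hull of a finite set of at most `n` points. -/
theorem limitK_nonempty_convex_polytope {d n : ℕ} (hd : 0 < d) (hn : 0 < n) (α : ℝ) (hα : 0 < α)
    (z : ℕ → Fin n → EuclideanSpace ℝ (Fin d)) (hdyn : IsDyn α z) :
    (limitK z).Nonempty ∧ IsCompact (limitK z) ∧ Convex ℝ (limitK z) ∧
      ∃ F : Finset (EuclideanSpace ℝ (Fin d)), F.card ≤ n ∧
        limitK z = convexHull ℝ (F : Set (EuclideanSpace ℝ (Fin d))) := by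
  have : Nonempty (Fin n) := ⟨⟨0, hn⟩⟩
  set co : ℕ → Set (EuclideanSpace ℝ (Fin d)) := fun k => convexHull ℝ (Set.range (z k)) with hco
  have hstep : ∀ k, co (k+1) ⊆ co k := fun k =>
    convexHull_min (Set.range_subset_iff.2 (step_mem hn hα hdyn k)) (convex_convexHull ℝ _)
  have hanti : ∀ {k l : ℕ}, k ≤ l → co l ⊆ co k := by
    intro k l hkl
    induction l with
    | zero => simp_all
    | succ l ih =>
      rcases Nat.lt_or_ge k (l+1) with h | h
      · exact (hstep l).trans (ih (Nat.lt_succ_iff.1 h))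
      · have : k = l + 1 := le_antisymm hkl h
        subst this; exact subset_rfl
  have hcompact : ∀ k, IsCompact (co k) := fun k =>
    (Set.finite_range (z k)).isCompact_convexHull ℝ
  have hclosed : ∀ k, IsClosed (co k) := fun k => (hcompact k).isClosed
  have hne : ∀ k, (co k).Nonempty := fun k =>
    ⟨z k ⟨0, hn⟩, subset_convexHull ℝ _ ⟨⟨0, hn⟩, rfl⟩⟩
  have hmem : ∀ k i, z k i ∈ co k := fun k i => subset_convexHull ℝ _ ⟨i, rfl⟩
  have hKne : (limitK z).Nonempty :=
    IsCompact.nonempty_iInter_of_sequence_nonempty_isCompact_isClosed co hstep hne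
      (hcompact 0) hclosed
  have hKclosed : IsClosed (limitK z) := isClosed_iInter hclosed
  have hKsub : limitK z ⊆ co 0 := Set.iInter_subset co 0
  have hKcompact : IsCompact (limitK z) := (hcompact 0).of_isClosed_subset hKclosed hKsub
  have hKconvex : Convex ℝ (limitK z) := convex_iInter fun k => convex_convexHull ℝ _
  refine ⟨hKne, hKcompact, hKconvex, ?_⟩
  -- subsequence converging in product space
  have hTcompact : IsCompact (Set.univ.pi fun _ : Fin n => co 0) :=
    isCompact_univ_pi fun _ => hcompact 0
  have hzmem : ∀ k, z k ∈ Set.univ.pi fun _ : Fin n => co 0 := by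
    intro k
    exact fun i _ => hanti (Nat.zero_le k) (hmem k i)
  obtain ⟨w, -, φ, hφ, hwt⟩ := hTcompact.tendsto_subseq hzmem
  have hwt' : ∀ i, Tendsto (fun m => z (φ m) i) atTop (nhds (w i)) := fun i =>
    (tendsto_pi_nhds.1 hwt) i
  -- each w i ∈ limitK
  have hwK : ∀ i, w i ∈ limitK z := by
    intro i
    refine Set.mem_iInter.2 fun k => ?_
    refine (hclosed k).mem_of_tendsto (hwt' i) ?_
    filter_upwards [eventually_ge_atTop k] with m hm
    exact hanti (hm.trans (hφ.le_apply)) (hmem (φ m) i)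
  set Sw := convexHull ℝ (Set.range w) with hSw
  have hSwclosed : IsClosed Sw := ((Set.finite_range w).isCompact_convexHull ℝ).isClosed
  have hsub1 : Sw ⊆ limitK z :=
    convexHull_min (Set.range_subset_iff.2 hwK) hKconvex
  have hsub2 : limitK z ⊆ Sw := by
    intro x hx
    rw [← hSwclosed.closure_eq]
    rw [Metric.mem_closure_iff]
    intro ε hε
    have hev : ∀ᶠ m in atTop, ∀ i, dist (z (φ m) i) (w i) < ε :=
      eventually_all.2 fun i => (hwt' i).eventually (Metric.ball_mem_nhds _ hε)
    obtain ⟨m, hm⟩ := hev.exists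
    have hthick : co (φ m) ⊆ thickening ε Sw := by
      refine convexHull_min ?_ ((convex_convexHull ℝ _).thickening ε)
      rintro _ ⟨i, rfl⟩
      exact Metric.mem_thickening_iff.2 ⟨w i, subset_convexHull ℝ _ ⟨i, rfl⟩, hm i⟩
    have hx' : x ∈ thickening ε Sw := hthick (Set.mem_iInter.1 hx (φ m))
    obtain ⟨y, hy, hxy⟩ := Metric.mem_thickening_iff.1 hx'
    exact ⟨y, hy, hxy⟩
  refine ⟨Finset.univ.image w, Finset.card_image_le.trans (by simp), ?_⟩
  have : (↑(Finset.univ.image w) : Set (EuclideanSpace ℝ (Fin d))) = Set.range w := by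
    simp
  rw [this]
  exact le_antisymm hsub2 hsub1


end
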